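/- arXiv:1805.07759 — 3 statements merged into one kernel-verified Lean document; each statement's English description precedes it below -/
import Mathlib

section
/- On ℝ^{4n}∖{0}, the function u(q) = −1/‖q‖² satisfies (Δu(q))∧⋯∧(Δu(q)) = 0 (n-fold exterior power) for every q ≠ 0; that is, the quaternionic Monge–Ampère operator of −1/‖q‖² vanishes away from the origin. -/
open scoped Quaternion
open Matrix Sum

noncomputable section

/-- The complex part `a` in the decomposition `q = a + b·j` of a quaternion. -/
def qa (q : ℍ[ℝ]) : ℂ := ⟨q.re, q.imI⟩

/-- The complex part `b` in the decomposition `q = a + b·j` of a quaternion. -/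
def qb (q : ℍ[ℝ]) : ℂ := ⟨q.imJ, q.imK⟩

/-- Entrywise complex conjugation of a complex matrix. -/
def conjM {m k : Type*} (M : Matrix m k ℂ) : Matrix m k ℂ := M.map (starRingEnd ℂ)

/-- The embedding τ : M_ℍ(p,m) → M_ℂ(2p,2m), τ(a + b·j) = [[a, −b],[conj b, conj a]]. -/
def tau {p m : ℕ} (M : Matrix (Fin p) (Fin m) ℍ[ℝ]) :
    Matrix (Fin p ⊕ Fin p) (Fin m ⊕ Fin m) ℂ :=
  Matrix.fromBlocks (M.map qa) (-(M.map qb)) (conjM (M.map qb)) (conjM (M.map qa))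

/-- The standard symplectic matrix J = [[0, Iₙ],[−Iₙ, 0]]. -/
def Jmat (n : ℕ) : Matrix (Fin n ⊕ Fin n) (Fin n ⊕ Fin n) ℂ :=
  Matrix.fromBlocks 0 1 (-1) 0

/-- index set {0,…,2n−1}, as two blocks. -/
abbrev Idx (n : ℕ) := Fin n ⊕ Fin n

/-- ℂ^{2n}. -/
abbrev Vc (n : ℕ) := Idx n → ℂ

/-- The exterior algebra of ℂ^{2n}. -/
abbrev EA (n : ℕ) := ExteriorAlgebra ℂ (Vc n)

/-- Basis 1-vectors ω^A of the exterior algebra. -/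
def ω {n : ℕ} (A : Idx n) : EA n := ExteriorAlgebra.ι ℂ (Pi.single A 1)

/-- Ω_{2n} = ω⁰∧ω^n∧ω¹∧ω^{n+1}∧…∧ω^{n−1}∧ω^{2n−1}. -/
def Ωn (n : ℕ) : EA n := (List.ofFn fun l : Fin n => ω (inl l) * ω (inr l)).prod

/-- β_n = Σ_l ω^l∧ω^{n+l}. -/
def βn (n : ℕ) : EA n := ∑ l : Fin n, ω (inl l) * ω (inr l)

/-- Induced action of a 2n×2n complex matrix on the exterior algebra,
determined by N.ω^A = Σ_B N_{AB} ω^B. -/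
def actE {n : ℕ} (N : Matrix (Idx n) (Idx n) ℂ) : EA n →ₐ[ℂ] EA n :=
  ExteriorAlgebra.map (Matrix.mulVecLin Nᵀ)

/-- ℝ^{4n}. -/
abbrev V4 (n : ℕ) := Fin (4 * n) → ℝ

/-- The coordinate index 4l+β. -/
def X {n : ℕ} (l : Fin n) (β : Fin 4) : Fin (4 * n) :=
  ⟨4 * l.val + β.val, by have h1 := l.isLt; have h2 := β.isLt; omega⟩

/-- Partial derivative of a complex-valued function on ℝ^{4n}. -/
def pd {n : ℕ} (a : Fin (4 * n)) (f : V4 n → ℂ) : V4 n → ℂ :=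
  fun q => fderiv ℝ f q (Pi.single a 1)

/-- The operators ∇_{Aα}, α = 0' (α=0) or 1' (α=1). -/
def nabla {n : ℕ} (A : Idx n) (α : Fin 2) (f : V4 n → ℂ) : V4 n → ℂ :=
  fun q =>
    match A with
    | Sum.inl l =>
        if α = 0 then pd (X l 0) f q + Complex.I * pd (X l 1) f q
        else -pd (X l 2) f q - Complex.I * pd (X l 3) f q
    | Sum.inr l =>
        if α = 0 then pd (X l 2) f q - Complex.I * pd (X l 3) f q
        else pd (X l 0) f q - Complex.I * pd (X l 1) f q

/-- ∇_{Aα} applied to a real-valued function. -/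
def nablaR {n : ℕ} (A : Idx n) (α : Fin 2) (u : V4 n → ℝ) : V4 n → ℂ :=
  nabla A α (fun x => ((u x : ℝ) : ℂ))

/-- Δ_{AB}u = ½(∇_{A0'}∇_{B1'}u − ∇_{B0'}∇_{A1'}u). -/
def Delta {n : ℕ} (A B : Idx n) (u : V4 n → ℝ) : V4 n → ℂ :=
  fun q => (1 / 2 : ℂ) *
    (nabla A 0 (nabla B 1 (fun x => ((u x : ℝ) : ℂ))) q
      - nabla B 0 (nabla A 1 (fun x => ((u x : ℝ) : ℂ))) q)

/-- The Baston operator Δu = Σ_{A,B} Δ_{AB}u · ω^A∧ω^B. -/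
def Baston {n : ℕ} (u : V4 n → ℝ) (q : V4 n) : EA n :=
  ∑ A : Idx n, ∑ B : Idx n, Delta A B u q • (ω A * ω B)

/-- The quaternion units. -/
def iH : ℍ[ℝ] := ⟨0, 1, 0, 0⟩
def jH : ℍ[ℝ] := ⟨0, 0, 1, 0⟩
def kH : ℍ[ℝ] := ⟨0, 0, 0, 1⟩

/-- Partial derivative of a quaternion-valued function on ℝ^{4n}. -/
def pdH {n : ℕ} (a : Fin (4 * n)) (f : V4 n → ℍ[ℝ]) : V4 n → ℍ[ℝ] :=
  fun q => fderiv ℝ f q (Pi.single a 1)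

/-- Partial derivative of a real-valued function on ℝ^{4n}. -/
def pdR {n : ℕ} (a : Fin (4 * n)) (f : V4 n → ℝ) : V4 n → ℝ :=
  fun q => fderiv ℝ f q (Pi.single a 1)

/-- ∂u/∂q_k = (∂_{x_{4k}} − i∂_{x_{4k+1}} − j∂_{x_{4k+2}} − k∂_{x_{4k+3}})u for real u. -/
def dq {n : ℕ} (k : Fin n) (u : V4 n → ℝ) : V4 n → ℍ[ℝ] :=
  fun q => ⟨pdR (X k 0) u q, -pdR (X k 1) u q, -pdR (X k 2) u q, -pdR (X k 3) u q⟩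

/-- ∂/∂q̄_l = ∂_{x_{4l}} + i∂_{x_{4l+1}} + j∂_{x_{4l+2}} + k∂_{x_{4l+3}} on ℍ-valued functions. -/
def dqbar {n : ℕ} (l : Fin n) (f : V4 n → ℍ[ℝ]) : V4 n → ℍ[ℝ] :=
  fun q => pdH (X l 0) f q + iH * pdH (X l 1) f q + jH * pdH (X l 2) f q + kH * pdH (X l 3) f q

/-- The quaternionic Hessian of a real function u. -/
def Hess {n : ℕ} (u : V4 n → ℝ) (q : V4 n) : Matrix (Fin n) (Fin n) ℍ[ℝ] :=
  Matrix.of fun l k => dqbar l (dq k u) q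

/-- ω^I = ω^{i₁}∧…∧ω^{i_p} for a multi-index I. -/
def ωProd {n p : ℕ} (I : Fin p → Idx n) : EA n :=
  (List.ofFn fun j => ω (I j)).prod

/-- The Λ^pℂ^{2n}-valued function with coefficient functions f: F = Σ_I f_I ω^I. -/
def formVal {n p : ℕ} (f : (Fin p → Idx n) → V4 n → ℂ) (q : V4 n) : EA n :=
  ∑ I : Fin p → Idx n, f I q • ωProd I

/-- Coefficients of d_α F for F with coefficients f:
d_αF = Σ_{A,I} ∇_{Aα}f_I · ω^A∧ω^I. -/
def dcoef {n p : ℕ} (α : Fin 2) (f : (Fin p → Idx n) → V4 n → ℂ) :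
    (Fin (p + 1) → Idx n) → V4 n → ℂ :=
  fun J => nabla (J 0) α (f (Fin.tail J))

/-- Coefficients of the wedge product F∧G. -/
def wedgeCoef {n p q : ℕ} (f : (Fin p → Idx n) → V4 n → ℂ)
    (g : (Fin q → Idx n) → V4 n → ℂ) : (Fin (p + q) → Idx n) → V4 n → ℂ :=
  fun J x => f (fun i => J (Fin.castAdd q i)) x * g (fun i => J (Fin.natAdd p i)) x

/-- The complex coordinate functions z^{Aα}. -/
def zc {n : ℕ} (A : Idx n) (α : Fin 2) : V4 n → ℂ :=
  fun x =>
    match A with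
    | Sum.inl l => if α = 0 then ⟨x (X l 0), -x (X l 1)⟩ else ⟨-x (X l 2), x (X l 3)⟩
    | Sum.inr l => if α = 0 then ⟨x (X l 2), x (X l 3)⟩ else ⟨x (X l 0), x (X l 1)⟩

/-- The quaternionic vector associated to a point of ℝ^{4n}. -/
def quatv {n : ℕ} (v : V4 n) : Fin n → ℍ[ℝ] :=
  fun l => ⟨v (X l 0), v (X l 1), v (X l 2), v (X l 3)⟩

/-- The four real components of a quaternion. -/
def comp4 (q : ℍ[ℝ]) : Fin 4 → ℝ := ![q.re, q.imI, q.imJ, q.imK]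

/-- The real-linear action of a quaternionic matrix 𝓤 on ℝ^{4n} ≅ ℍⁿ, q ↦ 𝓤q. -/
def act {n : ℕ} (U : Matrix (Fin n) (Fin n) ℍ[ℝ]) (v : V4 n) : V4 n :=
  fun a => comp4 ((U *ᵥ quatv v) ⟨a.val / 4, by have := a.isLt; omega⟩)
    ⟨a.val % 4, by omega⟩



/-! ### Auxiliary material for the proof -/

section AbstractAlgebra

theorem StAux.add_pow_sq_zero' {A : Type*} [Ring A] {x y : A} (h : Commute x y)
    (h2 : x * x = 0) (k : ℕ) : (x + y) ^ (k + 1) = y ^ (k + 1) + (k + 1) • (x * y ^ k) := by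
  induction k with
  | zero => simp [add_comm]
  | succ k ih =>
      have e1 : (x + y) * (x * y ^ k) = x * y ^ (k + 1) := by
        rw [add_mul, ← mul_assoc, h2, zero_mul, zero_add, ← mul_assoc, ← h.eq, mul_assoc,
          ← pow_succ']
      rw [pow_succ', ih, mul_add, mul_smul_comm, e1, add_mul, ← pow_succ',
        succ_nsmul (x * y ^ (k + 1)) (k + 1)]
      abel

variable {A : Type*} {ι : Type*} [Ring A] [DecidableEq ι] (x : ι → A)
  (hc : ∀ i j, Commute (x i) (x j))

def StAux.np (t : Finset ι) : A := t.noncommProd x (fun i _ j _ _ => hc i j)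

theorem StAux.np_insert {a : ι} {t : Finset ι} (ha : a ∉ t) :
    StAux.np x hc (insert a t) = x a * StAux.np x hc t :=
  Finset.noncommProd_insert_of_notMem _ _ _ _ ha

theorem StAux.np_erase_mul {a : ι} {t : Finset ι} (ha : a ∈ t) :
    StAux.np x hc (t.erase a) * x a = StAux.np x hc t :=
  Finset.noncommProd_erase_mul t ha x _

theorem StAux.sum_pow_sq_zero (h2 : ∀ i, x i * x i = 0) (s : Finset ι) (k : ℕ) :
    (∑ i ∈ s, x i) ^ k = k.factorial • ∑ t ∈ s.powersetCard k, StAux.np x hc t := by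
  induction s using Finset.induction generalizing k with
  | empty =>
      cases k with
      | zero => simp [StAux.np]; exact (Finset.noncommProd_empty _ _).symm
      | succ k =>
        rw [Finset.sum_empty, zero_pow (Nat.succ_ne_zero k),
          Finset.powersetCard_eq_empty.mpr (by simp), Finset.sum_empty, smul_zero]
  | @insert a s ha ih =>
      cases k with
      | zero => simp [StAux.np]; exact (Finset.noncommProd_empty _ _).symm
      | succ k =>
        have hcs : Commute (x a) (∑ i ∈ s, x i) := Commute.sum_right _ _ _ fun i _ => hc a i
        rw [Finset.sum_insert ha, StAux.add_pow_sq_zero' hcs (h2 a) k, ih, ih,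
          Finset.powersetCard_succ_insert ha]
        have hdisj : Disjoint (s.powersetCard (k+1)) ((s.powersetCard k).image (insert a)) := by
          rw [Finset.disjoint_right]
          rintro t ht hts
          obtain ⟨t', ht', rfl⟩ := Finset.mem_image.mp ht
          have := Finset.mem_powersetCard.mp hts
          exact ha (this.1 (Finset.mem_insert_self a t'))
        rw [Finset.sum_union hdisj, smul_add]
        congr 1
        have hinj : ∀ t ∈ s.powersetCard k, ∀ t' ∈ s.powersetCard k,
            insert a t = insert a t' → t = t' := by
          intro t ht t' ht' h
          have hat : a ∉ t := fun hh => ha ((Finset.mem_powersetCard.mp ht).1 hh)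
          have hat' : a ∉ t' := fun hh => ha ((Finset.mem_powersetCard.mp ht').1 hh)
          rw [← Finset.erase_insert hat, ← Finset.erase_insert hat', h]
        rw [Finset.sum_image hinj]
        have key : ∀ t ∈ s.powersetCard k, StAux.np x hc (insert a t) = x a * StAux.np x hc t := by
          intro t ht
          exact StAux.np_insert x hc (fun hh => ha ((Finset.mem_powersetCard.mp ht).1 hh))
        rw [Finset.sum_congr rfl key, ← Finset.mul_sum, mul_smul_comm, smul_smul,
          ← Nat.factorial_succ]

end AbstractAlgebra

namespace StAux

variable {n : ℕ}

local notation "ιE" => ExteriorAlgebra.ι ℂ (M := Vc n)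

theorem ι_anticomm (u v : Vc n) : ιE u * ιE v = -(ιE v * ιE u) :=
  eq_neg_of_add_eq_zero_left (ExteriorAlgebra.ι_add_mul_swap (R := ℂ) u v)

theorem ι_comm_pair (u a b : Vc n) : Commute (ιE a * ιE b) (ιE u) := by
  unfold Commute SemiconjBy
  calc (ιE a * ιE b) * ιE u = ιE a * (ιE b * ιE u) := by rw [mul_assoc]
    _ = ιE a * -(ιE u * ιE b) := by rw [ι_anticomm u b]; rw [ι_anticomm b u]; simp
    _ = -((ιE a * ιE u) * ιE b) := by noncomm_ring
    _ = -(-(ιE u * ιE a) * ιE b) := by rw [ι_anticomm u a]; simp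
    _ = ιE u * (ιE a * ιE b) := by noncomm_ring

/-- the basic 2-vectors -/
def eV (l : Fin n) : EA n := ω (inl l) * ω (inr l)

theorem eV_comm (l m : Fin n) : Commute (eV l) (eV m) := by
  unfold eV ω
  exact ((ι_comm_pair _ _ _).symm.mul_left (ι_comm_pair _ _ _).symm).symm

theorem pair_sq_zero (a b : Vc n) : (ιE a * ιE b) * (ιE a * ιE b) = 0 := by
  calc (ιE a * ιE b) * (ιE a * ιE b) = ιE a * (ιE b * ιE a) * ιE b := by noncomm_ring
    _ = ιE a * -(ιE a * ιE b) * ιE b := by rw [ι_anticomm b a]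
    _ = -((ιE a * ιE a) * (ιE b * ιE b)) := by noncomm_ring
    _ = 0 := by rw [ExteriorAlgebra.ι_sq_zero]; simp

theorem eV_sq_zero (l : Fin n) : eV l * eV l = 0 := pair_sq_zero _ _

/-- block component of a vector -/
def blk (v : Vc n) (l : Fin n) : Vc n :=
  Pi.single (inl l) (v (inl l)) + Pi.single (inr l) (v (inr l))

theorem sum_blk (v : Vc n) : ∑ l : Fin n, blk v l = v := by
  funext A
  rw [Finset.sum_apply]
  cases A with
  | inl m =>
      rw [Finset.sum_eq_single m]
      · simp [blk]
      · intro l _ hl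
        simp [blk, Pi.single_apply, hl, (Ne.symm hl : ¬ m = l)]
      · simp
  | inr m =>
      rw [Finset.sum_eq_single m]
      · simp [blk]
      · intro l _ hl
        simp [blk, Pi.single_apply, hl, (Ne.symm hl : ¬ m = l)]
      · simp

theorem single_eq_smul (A : Idx n) (c : ℂ) :
    (Pi.single A c : Vc n) = c • (Pi.single A 1 : Vc n) := by
  funext B
  by_cases h : B = A
  · subst h; simp
  · simp [Pi.single_apply, h, (fun hh => h hh.symm : ¬ A = B)]

theorem ι_blk (v : Vc n) (l : Fin n) :
    ιE (blk v l) = v (inl l) • ω (inl l) + v (inr l) • ω (inr l) := by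
  unfold blk ω
  rw [map_add, single_eq_smul _ (v (inl l)), single_eq_smul _ (v (inr l)), _root_.map_smul, _root_.map_smul]

theorem eV_mul_blk (u : Vc n) (l : Fin n) : eV l * ιE (blk u l) = 0 := by
  rw [ι_blk, mul_add, mul_smul_comm, mul_smul_comm]
  unfold eV ω
  have h1 : (ιE (Pi.single (inl l) 1) * ιE (Pi.single (inr l) 1)) * ιE (Pi.single (inl l) 1) = 0 := by
    calc _ = ιE (Pi.single (inl l) 1) * (ιE (Pi.single (inr l) 1) * ιE (Pi.single (inl l) 1)) := by
            rw [mul_assoc]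
      _ = ιE (Pi.single (inl l) 1) * -(ιE (Pi.single (inl l) 1) * ιE (Pi.single (inr l) 1)) := by
            rw [ι_anticomm]
      _ = -((ιE (Pi.single (inl l) 1) * ιE (Pi.single (inl l) 1)) * ιE (Pi.single (inr l) 1)) := by
            noncomm_ring
      _ = 0 := by rw [ExteriorAlgebra.ι_sq_zero]; simp
  have h2 : (ιE (Pi.single (inl l) 1) * ιE (Pi.single (inr l) 1)) * ιE (Pi.single (inr l) 1) = 0 := by
    rw [mul_assoc, ExteriorAlgebra.ι_sq_zero, mul_zero]
  rw [h1, h2, smul_zero, smul_zero, add_zero]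

theorem blk_mul_blk (v w : Vc n) (l : Fin n) :
    ιE (blk v l) * ιE (blk w l) =
      (v (inl l) * w (inr l) - v (inr l) * w (inl l)) • eV l := by
  rw [ι_blk, ι_blk]
  unfold eV ω
  have h1 : ιE (Pi.single (inl l) 1 : Vc n) * ιE (Pi.single (inl l) 1) = 0 :=
    ExteriorAlgebra.ι_sq_zero _
  have h2 : ιE (Pi.single (inr l) 1 : Vc n) * ιE (Pi.single (inr l) 1) = 0 :=
    ExteriorAlgebra.ι_sq_zero _
  have h3 : ιE (Pi.single (inr l) 1 : Vc n) * ιE (Pi.single (inl l) 1)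
      = -(ιE (Pi.single (inl l) 1) * ιE (Pi.single (inr l) 1)) := ι_anticomm _ _
  rw [add_mul, mul_add, mul_add, smul_mul_smul_comm, smul_mul_smul_comm,
    smul_mul_smul_comm, smul_mul_smul_comm, h1, h2, h3]
  rw [smul_zero, smul_zero, zero_add, add_zero, smul_neg, sub_smul, mul_comm (v (inr l))]
  abel

theorem pair_comm_pair (a b c d : Vc n) : Commute (ιE a * ιE b) (ιE c * ιE d) :=
  ((ι_comm_pair c a b).symm.mul_left (ι_comm_pair d a b).symm).symm

theorem ι_eq_sum_blk (v : Vc n) : ιE v = ∑ l : Fin n, ιE (blk v l) := by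
  rw [← map_sum, sum_blk]

/-- the complement reindexing -/
theorem powersetCard_pred (m : ℕ) :
    (Finset.univ : Finset (Fin (m + 1))).powersetCard m
      = Finset.univ.image (fun l : Fin (m+1) => Finset.univ.erase l) := by
  ext t
  simp only [Finset.mem_powersetCard, Finset.mem_image]
  constructor
  · rintro ⟨-, hcard⟩
    have hsd : (Finset.univ \ t).card = 1 := by
      rw [Finset.card_sdiff_of_subset (Finset.subset_univ t), Finset.card_univ, Fintype.card_fin, hcard]
      omega
    obtain ⟨l, hl⟩ := Finset.card_eq_one.mp hsd
    refine ⟨l, Finset.mem_univ l, ?_⟩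
    ext x
    simp only [Finset.mem_erase, Finset.mem_univ, and_true]
    constructor
    · intro hx
      by_contra hxt
      have : x ∈ Finset.univ \ t := Finset.mem_sdiff.mpr ⟨Finset.mem_univ x, hxt⟩
      rw [hl] at this
      exact hx (Finset.mem_singleton.mp this)
    · intro hxt hxl
      subst hxl
      have : x ∈ Finset.univ \ t := by rw [hl]; exact Finset.mem_singleton.mpr rfl
      exact (Finset.mem_sdiff.mp this).2 hxt
  · rintro ⟨l, -, rfl⟩
    refine ⟨Finset.subset_univ _, ?_⟩
    rw [Finset.card_erase_of_mem (Finset.mem_univ l), Finset.card_univ, Fintype.card_fin]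
    omega

theorem erase_inj_on : ∀ l : Fin n, ∀ l' : Fin n,
    Finset.univ.erase l = Finset.univ.erase l' → l = l' := by
  intro l l' h
  by_contra hne
  have : l ∈ Finset.univ.erase l' := Finset.mem_erase.mpr ⟨hne, Finset.mem_univ l⟩
  rw [← h] at this
  exact (Finset.mem_erase.mp this).1 rfl

theorem np_erase_mul_pair (v w : Vc n) (l : Fin n) :
    np eV eV_comm (Finset.univ.erase l) * (ιE v * ιE w)
      = (v (inl l) * w (inr l) - v (inr l) * w (inl l)) • np eV eV_comm Finset.univ := by
  set t := Finset.univ.erase l with ht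
  rw [ι_eq_sum_blk v, ι_eq_sum_blk w, Finset.sum_mul_sum, Finset.mul_sum]
  have hterm : ∀ a : Fin n, a ∈ Finset.univ →
      np eV eV_comm t * (∑ b : Fin n, ιE (blk v a) * ιE (blk w b))
        = if a = l then (v (inl l) * w (inr l) - v (inr l) * w (inl l)) • np eV eV_comm Finset.univ
          else 0 := by
    intro a _
    by_cases hal : a = l
    · subst hal
      rw [if_pos rfl, Finset.mul_sum]
      rw [Finset.sum_eq_single a]
      · rw [blk_mul_blk, mul_smul_comm, ← np_erase_mul eV eV_comm (Finset.mem_univ a)]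
      · intro b _ hba
        have hbt : b ∈ t := Finset.mem_erase.mpr ⟨hba, Finset.mem_univ b⟩
        rw [← np_erase_mul eV eV_comm hbt]
        have hcm : eV b * ιE (blk v a) = ιE (blk v a) * eV b := by
          unfold eV ω
          exact (ι_comm_pair (blk v a) _ _).eq
        calc np eV eV_comm (t.erase b) * eV b * (ιE (blk v a) * ιE (blk w b))
            = np eV eV_comm (t.erase b) * (eV b * ιE (blk v a)) * ιE (blk w b) := by
              noncomm_ring
          _ = np eV eV_comm (t.erase b) * ιE (blk v a) * (eV b * ιE (blk w b)) := by
              rw [hcm]; noncomm_ring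
          _ = 0 := by rw [eV_mul_blk, mul_zero]
      · intro h; exact absurd (Finset.mem_univ a) h
    · have hat : a ∈ t := Finset.mem_erase.mpr ⟨hal, Finset.mem_univ a⟩
      rw [if_neg hal, Finset.mul_sum]
      apply Finset.sum_eq_zero
      intro b _
      rw [← np_erase_mul eV eV_comm hat]
      calc np eV eV_comm (t.erase a) * eV a * (ιE (blk v a) * ιE (blk w b))
          = np eV eV_comm (t.erase a) * (eV a * ιE (blk v a)) * ιE (blk w b) := by noncomm_ring
        _ = 0 := by rw [eV_mul_blk, mul_zero, zero_mul]
  rw [Finset.sum_congr rfl hterm, Finset.sum_ite_eq' Finset.univ l, if_pos (Finset.mem_univ l)]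

theorem βn_eq : βn n = ∑ l : Fin n, eV l := rfl

set_option maxHeartbeats 1000000 in
theorem key_pow {m : ℕ} (a b : ℂ) (v w : Vc (m+1))
    (hP : a + b * (∑ l : Fin (m+1),
      (v (inl l) * w (inr l) - v (inr l) * w (inl l))) = 0) :
    (a • βn (m+1) + b • (ExteriorAlgebra.ι ℂ v * ExteriorAlgebra.ι ℂ w)) ^ (m+1) = 0 := by
  set P : ℂ := ∑ l : Fin (m+1), (v (inl l) * w (inr l) - v (inr l) * w (inl l)) with hPdef
  set E := np eV eV_comm (Finset.univ : Finset (Fin (m+1))) with hE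
  set x := b • (ExteriorAlgebra.ι ℂ v * ExteriorAlgebra.ι ℂ w) with hx
  set y := a • βn (m+1) with hy
  have hcomm : Commute x y := by
    apply Commute.smul_left
    apply Commute.smul_right
    rw [βn_eq]
    exact Commute.sum_right _ _ _ fun l _ => by
      unfold eV ω
      exact pair_comm_pair _ _ _ _
  have hx2 : x * x = 0 := by
    rw [hx, smul_mul_smul_comm, pair_sq_zero, smul_zero]
  have hpow : (y + x) ^ (m + 1) = y ^ (m+1) + (m+1) • (x * y ^ m) := by
    rw [add_comm y x]
    exact add_pow_sq_zero' hcomm hx2 m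
  rw [hpow]
  have hcard : (Finset.univ : Finset (Fin (m+1))).card = m + 1 := by
    rw [Finset.card_univ, Fintype.card_fin]
  have hps : Finset.powersetCard (m+1) (Finset.univ : Finset (Fin (m+1))) = {Finset.univ} := by
    have h0 := Finset.powersetCard_self (Finset.univ : Finset (Fin (m+1)))
    rwa [hcard] at h0
  have hβpow : βn (m+1) ^ (m+1) = (m+1).factorial • E := by
    rw [βn_eq, sum_pow_sq_zero eV eV_comm eV_sq_zero, hps, Finset.sum_singleton]
  have hβpowm : βn (m+1) ^ m = m.factorial •
      ∑ l : Fin (m+1), np eV eV_comm (Finset.univ.erase l) := by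
    rw [βn_eq, sum_pow_sq_zero eV eV_comm eV_sq_zero, powersetCard_pred,
      Finset.sum_image (fun l _ l' _ h => erase_inj_on l l' h)]
  have hxy : x * y ^ m = (b * a ^ m * m.factorial * P) • E := by
    rw [hx, hy, smul_pow, smul_mul_smul_comm]
    have hcm : (ExteriorAlgebra.ι ℂ v * ExteriorAlgebra.ι ℂ w) * βn (m+1) ^ m
        = βn (m+1) ^ m * (ExteriorAlgebra.ι ℂ v * ExteriorAlgebra.ι ℂ w) := by
      have : Commute (ExteriorAlgebra.ι ℂ v * ExteriorAlgebra.ι ℂ w) (βn (m+1)) := by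
        rw [βn_eq]
        exact Commute.sum_right _ _ _ fun l _ => by
          unfold eV ω; exact pair_comm_pair _ _ _ _
      exact (this.pow_right m).eq
    rw [hcm, hβpowm, smul_mul_assoc, Finset.sum_mul]
    have : ∀ l : Fin (m+1), l ∈ Finset.univ →
        np eV eV_comm (Finset.univ.erase l) * (ExteriorAlgebra.ι ℂ v * ExteriorAlgebra.ι ℂ w)
          = (v (inl l) * w (inr l) - v (inr l) * w (inl l)) • E := fun l _ =>
      np_erase_mul_pair v w l
    rw [Finset.sum_congr rfl this, ← Finset.sum_smul, ← hPdef,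
      ← Nat.cast_smul_eq_nsmul ℂ, smul_smul, smul_smul]
  rw [hy, smul_pow, hβpow, hxy]
  rw [← Nat.cast_smul_eq_nsmul ℂ (m+1).factorial, ← Nat.cast_smul_eq_nsmul ℂ (m+1),
    smul_smul, smul_smul, ← add_smul]
  have hscal : a ^ (m+1) * ((m+1).factorial : ℂ)
      + ((m+1 : ℕ) : ℂ) * (b * a ^ m * m.factorial * P) = ((m+1).factorial : ℂ) * a ^ m * (a + b * P) := by
    rw [Nat.factorial_succ]
    push_cast
    ring
  rw [hscal, hP, mul_zero, zero_smul]

end StAux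


namespace StAux

variable {n : ℕ}

/-- squared norm -/
def ρf : V4 n → ℝ := fun x => ∑ a, x a ^ 2

/-- its derivative -/
def Lρ (x : V4 n) : V4 n →L[ℝ] ℝ :=
  ∑ a, (2 * x a) • ContinuousLinearMap.proj a

theorem hasFDeriv_rho (x : V4 n) : HasFDerivAt (ρf (n := n)) (Lρ x) x := by
  have h : ∀ a : Fin (4*n), HasFDerivAt (fun y : V4 n => y a ^ 2)
      ((2 * x a) • ContinuousLinearMap.proj (R := ℝ) (φ := fun _ : Fin (4*n) => ℝ) a) x := by
    intro a
    have hp : HasFDerivAt (fun y : V4 n => y a)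
        (ContinuousLinearMap.proj (R := ℝ) (φ := fun _ : Fin (4*n) => ℝ) a) x :=
      (ContinuousLinearMap.proj (R := ℝ) (φ := fun _ : Fin (4*n) => ℝ) a).hasFDerivAt
    have := (hasDerivAt_pow 2 (x a)).comp_hasFDerivAt x hp
    simpa [Function.comp_def] using this
  exact HasFDerivAt.fun_sum (fun a _ => h a)

theorem Lρ_single (x : V4 n) (a : Fin (4*n)) : Lρ x (Pi.single a 1) = 2 * x a := by
  unfold Lρ
  rw [ContinuousLinearMap.sum_apply]
  rw [Finset.sum_eq_single a]
  · simp
  · intro b _ hb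
    simp [Pi.single_apply, hb]
  · simp

/-- the function u -/
def urf : V4 n → ℝ := fun x => -(1 / ρf x)

/-- the coefficient function 2/ρ² -/
def cr : V4 n → ℝ := fun x => 2 * ((ρf x) ^ 2)⁻¹

/-- the derivative scalar of cr -/
def sr : V4 n → ℝ := fun x => 2 * (-(2 * ρf x) / ((ρf x) ^ 2) ^ 2)

theorem hasFDeriv_urf {x : V4 n} (hx : ρf x ≠ 0) :
    HasFDerivAt (urf (n := n)) ((((ρf x) ^ 2)⁻¹) • Lρ x) x := by
  have h1 : HasDerivAt (fun t : ℝ => -(1 / t)) (((ρf x) ^ 2)⁻¹) (ρf x) := by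
    have := (hasDerivAt_inv hx).fun_neg
    simpa [one_div] using this
  exact h1.comp_hasFDerivAt x (hasFDeriv_rho x)

theorem hasFDeriv_cr {x : V4 n} (hx : ρf x ≠ 0) :
    HasFDerivAt (cr (n := n)) (sr x • Lρ x) x := by
  have h2 : HasDerivAt (fun t : ℝ => 2 * (t ^ 2)⁻¹) (sr x) (ρf x) := by
    have hpow : HasDerivAt (fun t : ℝ => t ^ 2) (2 * ρf x ^ 1) (ρf x) := by
      simpa using hasDerivAt_pow 2 (ρf x)
    have hinv := hpow.inv (pow_ne_zero 2 hx)
    have := hinv.const_mul (2 : ℝ)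
    simpa [sr] using this
  exact h2.comp_hasFDerivAt x (hasFDeriv_cr_aux x)
  where hasFDeriv_cr_aux (x : V4 n) := hasFDeriv_rho x

theorem pd_ofReal {f : V4 n → ℝ} {L : V4 n →L[ℝ] ℝ} {x : V4 n}
    (h : HasFDerivAt f L x) (a : Fin (4*n)) :
    pd a (fun y => ((f y : ℝ) : ℂ)) x = ((L (Pi.single a 1) : ℝ) : ℂ) := by
  have h2 : HasFDerivAt (fun y => ((f y : ℝ) : ℂ)) (Complex.ofRealCLM.comp L) x :=
    Complex.ofRealCLM.hasFDerivAt.comp x h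
  unfold pd
  rw [h2.fderiv]
  simp

theorem pd_urf {x : V4 n} (hx : ρf x ≠ 0) (a : Fin (4*n)) :
    pd a (fun y => ((urf y : ℝ) : ℂ)) x = (((((ρf x) ^ 2)⁻¹) * (2 * x a) : ℝ) : ℂ) := by
  rw [pd_ofReal (hasFDeriv_urf hx) a]
  norm_num [Lρ_single]

/-- the linear coefficient functions -/
def wv : Idx n → V4 n → ℂ := fun B x =>
  match B with
  | inl l => -(x (X l 2) : ℂ) - Complex.I * (x (X l 3) : ℝ)
  | inr l => (x (X l 0) : ℂ) - Complex.I * (x (X l 1) : ℝ)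

def ζv : Idx n → V4 n → ℂ := fun A x =>
  match A with
  | inl m => (x (X m 0) : ℂ) + Complex.I * (x (X m 1) : ℝ)
  | inr m => (x (X m 2) : ℂ) - Complex.I * (x (X m 3) : ℝ)

theorem one_ne_zero_fin2 : (1 : Fin 2) ≠ 0 := by decide

theorem nabla_inl0 (m : Fin n) (f : V4 n → ℂ) (q : V4 n) :
    nabla (inl m) 0 f q = pd (X m 0) f q + Complex.I * pd (X m 1) f q := rfl

theorem nabla_inr0 (m : Fin n) (f : V4 n → ℂ) (q : V4 n) :
    nabla (inr m) 0 f q = pd (X m 2) f q - Complex.I * pd (X m 3) f q := rfl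

theorem nabla_inl1 (m : Fin n) (f : V4 n → ℂ) (q : V4 n) :
    nabla (inl m) 1 f q = -pd (X m 2) f q - Complex.I * pd (X m 3) f q := rfl

theorem nabla_inr1 (m : Fin n) (f : V4 n → ℂ) (q : V4 n) :
    nabla (inr m) 1 f q = pd (X m 0) f q - Complex.I * pd (X m 1) f q := rfl

theorem nabla1_eq (B : Idx n) (x : V4 n) (hx : ρf x ≠ 0) :
    nabla B 1 (fun y => ((urf y : ℝ) : ℂ)) x = ((cr x : ℝ) : ℂ) * wv B x := by
  cases B with
  | inl l =>
      rw [nabla_inl1, pd_urf hx, pd_urf hx]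
      show -(((((ρf x) ^ 2)⁻¹) * (2 * x (X l 2)) : ℝ) : ℂ)
        - Complex.I * (((((ρf x) ^ 2)⁻¹) * (2 * x (X l 3)) : ℝ) : ℂ)
        = ((cr x : ℝ) : ℂ) * (-(x (X l 2) : ℂ) - Complex.I * (x (X l 3) : ℝ))
      unfold cr
      push_cast
      ring
  | inr l =>
      rw [nabla_inr1, pd_urf hx, pd_urf hx]
      show (((((ρf x) ^ 2)⁻¹) * (2 * x (X l 0)) : ℝ) : ℂ)
        - Complex.I * (((((ρf x) ^ 2)⁻¹) * (2 * x (X l 1)) : ℝ) : ℂ)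
        = ((cr x : ℝ) : ℂ) * ((x (X l 0) : ℂ) - Complex.I * (x (X l 1) : ℝ))
      unfold cr
      push_cast
      ring

/-- the model first-derivative functions -/
def Fc (B : Idx n) : V4 n → ℂ := fun x => ((cr x : ℝ) : ℂ) * wv B x

theorem continuous_rho : Continuous (ρf (n := n)) := by
  unfold ρf
  exact continuous_finset_sum _ fun a _ => (continuous_apply a).pow 2

theorem nabla1_ev {q : V4 n} (B : Idx n) (hq : ρf q ≠ 0) :
    (fun x => nabla B 1 (fun y => ((urf y : ℝ) : ℂ)) x) =ᶠ[nhds q] Fc B := by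
  have hopen : IsOpen {x : V4 n | ρf x ≠ 0} :=
    isOpen_compl_singleton.preimage continuous_rho
  filter_upwards [hopen.mem_nhds hq] with x hx
  exact nabla1_eq B x hx

theorem pd_congr {f g : V4 n → ℂ} {q : V4 n} (h : f =ᶠ[nhds q] g) (a : Fin (4*n)) :
    pd a f q = pd a g q := by
  unfold pd
  rw [h.fderiv_eq]

theorem nabla0_congr {f g : V4 n → ℂ} {q : V4 n} (h : f =ᶠ[nhds q] g) (A : Idx n) :
    nabla A 0 f q = nabla A 0 g q := by
  cases A with
  | inl m => rw [nabla_inl0, nabla_inl0, pd_congr h, pd_congr h]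
  | inr m => rw [nabla_inr0, nabla_inr0, pd_congr h, pd_congr h]

/-- complex projection CLM -/
def cpj (a : Fin (4*n)) : V4 n →L[ℝ] ℂ :=
  Complex.ofRealCLM.comp (ContinuousLinearMap.proj a)

/-- derivative coefficients of wv -/
def dw (B : Idx n) (a : Fin (4*n)) : ℂ :=
  match B with
  | inl l => -(((Pi.single a 1 : V4 n) (X l 2) : ℝ) : ℂ)
      - Complex.I * ((Pi.single a 1 : V4 n) (X l 3) : ℝ)
  | inr l => (((Pi.single a 1 : V4 n) (X l 0) : ℝ) : ℂ)
      - Complex.I * ((Pi.single a 1 : V4 n) (X l 1) : ℝ)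

theorem pd_Fc {q : V4 n} (hq : ρf q ≠ 0) (B : Idx n) (a : Fin (4*n)) :
    pd a (Fc B) q = ((cr q : ℝ) : ℂ) * dw B a
      + wv B q * ((sr q * (2 * q a) : ℝ) : ℂ) := by
  have hc : HasFDerivAt (fun x : V4 n => ((cr x : ℝ) : ℂ))
      (Complex.ofRealCLM.comp (sr q • Lρ q)) q :=
    Complex.ofRealCLM.hasFDerivAt.comp q (hasFDeriv_cr hq)
  cases B with
  | inl l =>
      have hw : HasFDerivAt (fun x : V4 n => wv (inl l) x)
          (-(cpj (X l 2)) - Complex.I • cpj (X l 3)) q := by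
        have h2 : HasFDerivAt (fun x : V4 n => ((x (X l 2) : ℝ) : ℂ)) (cpj (X l 2)) q :=
          (cpj (X l 2)).hasFDerivAt
        have h3 : HasFDerivAt (fun x : V4 n => ((x (X l 3) : ℝ) : ℂ)) (cpj (X l 3)) q :=
          (cpj (X l 3)).hasFDerivAt
        exact h2.neg.sub (h3.const_mul Complex.I)
      have hmul := hc.fun_mul hw
      unfold pd Fc
      rw [hmul.fderiv]
      show ((cr q : ℝ) : ℂ) • ((-(cpj (X l 2)) - Complex.I • cpj (X l 3)) (Pi.single a 1))
        + wv (inl l) q • ((Complex.ofRealCLM.comp (sr q • Lρ q)) (Pi.single a 1)) = _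
      simp only [ContinuousLinearMap.sub_apply, ContinuousLinearMap.neg_apply,
        ContinuousLinearMap.smul_apply, ContinuousLinearMap.coe_comp', Function.comp_apply,
        Complex.ofRealCLM_apply, cpj, ContinuousLinearMap.proj_apply, smul_eq_mul]
      rw [Lρ_single]
      unfold dw
      push_cast
      ring
  | inr l =>
      have hw : HasFDerivAt (fun x : V4 n => wv (inr l) x)
          (cpj (X l 0) - Complex.I • cpj (X l 1)) q := by
        have h2 : HasFDerivAt (fun x : V4 n => ((x (X l 0) : ℝ) : ℂ)) (cpj (X l 0)) q :=
          (cpj (X l 0)).hasFDerivAt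
        have h3 : HasFDerivAt (fun x : V4 n => ((x (X l 1) : ℝ) : ℂ)) (cpj (X l 1)) q :=
          (cpj (X l 1)).hasFDerivAt
        exact h2.sub (h3.const_mul Complex.I)
      have hmul := hc.fun_mul hw
      unfold pd Fc
      rw [hmul.fderiv]
      show ((cr q : ℝ) : ℂ) • ((cpj (X l 0) - Complex.I • cpj (X l 1)) (Pi.single a 1))
        + wv (inr l) q • ((Complex.ofRealCLM.comp (sr q • Lρ q)) (Pi.single a 1)) = _
      simp only [ContinuousLinearMap.sub_apply, ContinuousLinearMap.neg_apply,
        ContinuousLinearMap.smul_apply, ContinuousLinearMap.coe_comp', Function.comp_apply,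
        Complex.ofRealCLM_apply, cpj, ContinuousLinearMap.proj_apply, smul_eq_mul]
      rw [Lρ_single]
      unfold dw
      push_cast
      ring

theorem X_eq_iff {l m : Fin n} {γ β : Fin 4} : X l γ = X m β ↔ (l = m ∧ γ = β) := by
  constructor
  · intro h
    have hv : 4 * l.val + γ.val = 4 * m.val + β.val := congrArg Fin.val h
    have hγ := γ.isLt
    have hβ := β.isLt
    constructor
    · exact Fin.ext (by omega)
    · exact Fin.ext (by omega)
  · rintro ⟨rfl, rfl⟩; rfl

theorem single_X {l m : Fin n} {γ β : Fin 4} :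
    (Pi.single (X m β) (1 : ℝ) : V4 n) (X l γ) = if l = m ∧ γ = β then 1 else 0 := by
  rw [Pi.single_apply]
  by_cases h : X l γ = X m β
  · rw [if_pos h, if_pos (X_eq_iff.mp h)]
  · rw [if_neg h, if_neg (fun hh => h (X_eq_iff.mpr hh))]

/-- model second-derivative structure constants -/
def dd : Idx n → Idx n → ℂ
  | inl m, inr l => if m = l then 2 else 0
  | inr m, inl l => if m = l then -2 else 0
  | _, _ => 0

set_option maxHeartbeats 1000000 in
theorem nabla0_Fc {q : V4 n} (hq : ρf q ≠ 0) (A B : Idx n) :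
    nabla A 0 (Fc B) q = ((2 * sr q : ℝ) : ℂ) * ζv A q * wv B q
      + ((cr q : ℝ) : ℂ) * dd A B := by
  cases A with
  | inl m =>
      rw [nabla_inl0, pd_Fc hq, pd_Fc hq]
      cases B with
      | inl l =>
          simp only [dw, dd, ζv, wv]
          rw [single_X, single_X, single_X, single_X]
          simp
          push_cast
          ring
      | inr l =>
          simp only [dw, dd, ζv, wv]
          rw [single_X, single_X, single_X, single_X]
          by_cases h : l = m
          · subst h
            simp
            push_cast
            linear_combination (-((cr q : ℝ) : ℂ)) * Complex.I_sq
          · rw [if_neg (by simp [h]), if_neg (by simp [h]), if_neg (by simp [h]),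
              if_neg (by simp [h]), if_neg (fun hh => h hh.symm)]
            simp
            push_cast
            ring
  | inr m =>
      rw [nabla_inr0, pd_Fc hq, pd_Fc hq]
      cases B with
      | inl l =>
          simp only [dw, dd, ζv, wv]
          rw [single_X, single_X, single_X, single_X]
          by_cases h : l = m
          · subst h
            simp
            push_cast
            linear_combination ((cr q : ℝ) : ℂ) * Complex.I_sq
          · rw [if_neg (by simp [h]), if_neg (by simp [h]), if_neg (by simp [h]),
              if_neg (by simp [h]), if_neg (fun hh => h hh.symm)]
            simp
            push_cast
            ring
      | inr l =>
          simp only [dw, dd, ζv, wv]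
          rw [single_X, single_X, single_X, single_X]
          simp
          push_cast
          ring

theorem T_eq {q : V4 n} (hq : ρf q ≠ 0) (A B : Idx n) :
    nabla A 0 (nabla B 1 (fun y => ((urf y : ℝ) : ℂ))) q
      = ((2 * sr q : ℝ) : ℂ) * ζv A q * wv B q + ((cr q : ℝ) : ℂ) * dd A B := by
  rw [nabla0_congr (nabla1_ev B hq) A]
  exact nabla0_Fc hq A B

end StAux


namespace StAux

variable {n : ℕ}

theorem ι_eq_sum (v : Vc n) :
    ExteriorAlgebra.ι ℂ v = ∑ A : Idx n, v A • ω A := by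
  conv_lhs => rw [← Finset.univ_sum_single v]
  rw [map_sum]
  refine Finset.sum_congr rfl fun A _ => ?_
  rw [single_eq_smul, _root_.map_smul]
  rfl

theorem omega_anticomm (A B : Idx n) : ω B * ω A = -(ω A * ω B) := by
  unfold ω
  exact ι_anticomm _ _

theorem dd_anti (A B : Idx n) : dd B A = -dd A B := by
  cases A with
  | inl m =>
      cases B with
      | inl l => simp [dd]
      | inr l =>
          by_cases h : m = l
          · subst h; simp [dd]
          · have h' : ¬ l = m := fun hh => h hh.symm
            simp [dd, h, h']
  | inr m =>
      cases B with
      | inl l =>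
          by_cases h : m = l
          · subst h; simp [dd]
          · have h' : ¬ l = m := fun hh => h hh.symm
            simp [dd, h, h']
      | inr l => simp [dd]

set_option maxHeartbeats 1000000 in
theorem sum_dd : ∑ A : Idx n, ∑ B : Idx n, dd A B • (ω A * ω B) = (4 : ℂ) • βn n := by
  have hinner : ∀ A : Idx n, ∑ B : Idx n, dd A B • (ω A * ω B)
      = (match A with
         | inl m => (2 : ℂ) • (ω (inl m) * ω (inr m))
         | inr m => (2 : ℂ) • (ω (inl m) * ω (inr m))) := by
    intro A
    cases A with
    | inl m =>
        rw [Fintype.sum_sum_type]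
        have h1 : ∑ l : Fin n, dd (inl m) (inl l) • (ω (inl m) * ω (inl l)) = 0 := by
          apply Finset.sum_eq_zero; intro l _; simp [dd]
        have h2 : ∑ l : Fin n, dd (inl m) (inr l) • (ω (inl m) * ω (inr l))
            = (2 : ℂ) • (ω (inl m) * ω (inr m)) := by
          rw [Finset.sum_eq_single m]
          · simp [dd]
          · intro l _ hl
            have h' : ¬ m = l := fun hh => hl hh.symm
            simp [dd, h']
          · simp
        rw [h1, h2, zero_add]
    | inr m =>
        rw [Fintype.sum_sum_type]
        have h1 : ∑ l : Fin n, dd (inr m) (inl l) • (ω (inr m) * ω (inl l))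
            = (2 : ℂ) • (ω (inl m) * ω (inr m)) := by
          rw [Finset.sum_eq_single m]
          · rw [omega_anticomm]
            simp [dd]
          · intro l _ hl
            have h' : ¬ m = l := fun hh => hl hh.symm
            simp [dd, h']
          · simp
        have h2 : ∑ l : Fin n, dd (inr m) (inr l) • (ω (inr m) * ω (inr l)) = 0 := by
          apply Finset.sum_eq_zero; intro l _; simp [dd]
        rw [h1, h2, add_zero]
  rw [Finset.sum_congr rfl fun A _ => hinner A]
  rw [Fintype.sum_sum_type, ← Finset.sum_add_distrib]
  unfold βn
  rw [Finset.smul_sum]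
  refine Finset.sum_congr rfl fun m _ => ?_
  rw [← add_smul]
  norm_num

theorem sum_pair (q : V4 n) :
    ∑ A : Idx n, ∑ B : Idx n, (ζv A q * wv B q) • (ω A * ω B)
      = ExteriorAlgebra.ι ℂ (fun A => ζv A q) * ExteriorAlgebra.ι ℂ (fun B => wv B q) := by
  rw [ι_eq_sum, ι_eq_sum, Finset.sum_mul_sum]
  exact Finset.sum_congr rfl fun A _ => Finset.sum_congr rfl fun B _ => by
    rw [smul_mul_smul_comm]

set_option maxHeartbeats 1000000 in
theorem baston_formula (q : V4 n) (hq : ρf q ≠ 0) :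
    Baston (urf (n := n)) q
      = ((4 * cr q : ℝ) : ℂ) • βn n
        + ((2 * sr q : ℝ) : ℂ) •
          (ExteriorAlgebra.ι ℂ (fun A => ζv A q) * ExteriorAlgebra.ι ℂ (fun B => wv B q)) := by
  set cb : ℂ := ((2 * sr q : ℝ) : ℂ) with hcb
  set ca : ℂ := ((cr q : ℝ) : ℂ) with hca
  have hDelta : ∀ A B : Idx n, Delta A B (urf (n := n)) q
      = ((1/2 : ℂ) * cb * (ζv A q * wv B q - ζv B q * wv A q)) + ca * dd A B := by
    intro A B
    show (1 / 2 : ℂ) * (nabla A 0 (nabla B 1 (fun x => ((urf x : ℝ) : ℂ))) q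
      - nabla B 0 (nabla A 1 (fun x => ((urf x : ℝ) : ℂ))) q) = _
    rw [T_eq hq A B, T_eq hq B A, dd_anti B A]
    ring
  unfold Baston
  rw [Finset.sum_congr rfl fun A _ => Finset.sum_congr rfl fun B (_ : B ∈ Finset.univ) =>
    by rw [hDelta A B, add_smul]]
  rw [Finset.sum_congr rfl fun A (_ : A ∈ Finset.univ) => Finset.sum_add_distrib,
    Finset.sum_add_distrib]
  have hpart2 : ∑ A : Idx n, ∑ B : Idx n, (ca * dd A B) • (ω A * ω B)
      = ((4 * cr q : ℝ) : ℂ) • βn n := by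
    rw [Finset.sum_congr rfl fun A _ => Finset.sum_congr rfl fun B (_ : B ∈ Finset.univ) =>
      by rw [mul_smul]]
    rw [Finset.sum_congr rfl fun A (_ : A ∈ Finset.univ) => (Finset.smul_sum).symm,
      ← Finset.smul_sum, sum_dd, smul_smul]
    congr 1
    rw [hca]
    push_cast
    ring
  have hpart1 : ∑ A : Idx n, ∑ B : Idx n,
      ((1/2 : ℂ) * cb * (ζv A q * wv B q - ζv B q * wv A q)) • (ω A * ω B)
      = cb • (ExteriorAlgebra.ι ℂ (fun A => ζv A q) * ExteriorAlgebra.ι ℂ (fun B => wv B q)) := by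
    set S := ∑ A : Idx n, ∑ B : Idx n, (ζv A q * wv B q) • (ω A * ω B) with hS
    have hsplit : ∀ A B : Idx n,
        ((1/2 : ℂ) * cb * (ζv A q * wv B q - ζv B q * wv A q)) • (ω A * ω B)
        = ((1/2 : ℂ) * cb) • ((ζv A q * wv B q) • (ω A * ω B))
          - ((1/2 : ℂ) * cb) • ((ζv B q * wv A q) • (ω A * ω B)) := by
      intro A B
      rw [← smul_sub, ← sub_smul, ← smul_smul]
    rw [Finset.sum_congr rfl fun A _ => Finset.sum_congr rfl fun B (_ : B ∈ Finset.univ) =>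
      hsplit A B]
    rw [Finset.sum_congr rfl fun A (_ : A ∈ Finset.univ) => Finset.sum_sub_distrib _ _,
      Finset.sum_sub_distrib]
    have hpull1 : ∑ A : Idx n, ∑ B : Idx n,
        ((1/2 : ℂ) * cb) • ((ζv A q * wv B q) • (ω A * ω B)) = ((1/2 : ℂ) * cb) • S := by
      rw [hS, Finset.smul_sum]
      exact Finset.sum_congr rfl fun A _ => (Finset.smul_sum).symm
    have hswap : ∑ A : Idx n, ∑ B : Idx n, (ζv B q * wv A q) • (ω A * ω B) = -S := by
      rw [Finset.sum_comm, hS, ← Finset.sum_neg_distrib]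
      refine Finset.sum_congr rfl fun B _ => ?_
      rw [← Finset.sum_neg_distrib]
      refine Finset.sum_congr rfl fun A _ => ?_
      rw [omega_anticomm B A, smul_neg]
    have hpull2 : ∑ A : Idx n, ∑ B : Idx n,
        ((1/2 : ℂ) * cb) • ((ζv B q * wv A q) • (ω A * ω B)) = ((1/2 : ℂ) * cb) • (-S) := by
      rw [← hswap, Finset.smul_sum]
      exact Finset.sum_congr rfl fun A _ => (Finset.smul_sum).symm
    rw [hpull1, hpull2, smul_neg, sub_neg_eq_add, ← add_smul]
    have hcoef : (1/2 : ℂ) * cb + (1/2 : ℂ) * cb = cb := by ring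
    rw [hcoef, hS, sum_pair]
  rw [hpart1, hpart2, add_comm]

theorem rho_reindex (q : V4 n) :
    ρf q = ∑ l : Fin n,
      (q (X l 0) ^ 2 + q (X l 1) ^ 2 + q (X l 2) ^ 2 + q (X l 3) ^ 2) := by
  unfold ρf
  have hbij : Function.Bijective (fun p : Fin n × Fin 4 => X p.1 p.2) := by
    rw [Fintype.bijective_iff_injective_and_card]
    constructor
    · intro p p' h
      obtain ⟨h1, h2⟩ := X_eq_iff.mp h
      exact Prod.ext h1 h2
    · simp [Fintype.card_prod]
      omega
  rw [← Fintype.sum_bijective _ hbij (fun p => q (X p.1 p.2) ^ 2) (fun a => q a ^ 2)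
    (fun p => rfl)]
  rw [Fintype.sum_prod_type]
  refine Finset.sum_congr rfl fun l _ => ?_
  rw [Fin.sum_univ_four]

theorem pairing_eq (q : V4 n) :
    ∑ l : Fin n, (ζv (inl l) q * wv (inr l) q - ζv (inr l) q * wv (inl l) q)
      = ((ρf q : ℝ) : ℂ) := by
  have hterm : ∀ l : Fin n, ζv (inl l) q * wv (inr l) q - ζv (inr l) q * wv (inl l) q
      = ((q (X l 0) ^ 2 + q (X l 1) ^ 2 + q (X l 2) ^ 2 + q (X l 3) ^ 2 : ℝ) : ℂ) := by
    intro l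
    simp only [ζv, wv]
    push_cast
    linear_combination (-(q (X l 1) : ℂ) ^ 2 - (q (X l 3) : ℂ) ^ 2) * Complex.I_sq
  rw [Finset.sum_congr rfl fun l _ => hterm l, rho_reindex q]
  push_cast
  ring

end StAux

/-- the quaternionic Monge–Ampère operator of −1/‖q‖² vanishes
away from the origin: (Δ(−1/‖q‖²))^∧n = 0 for q ≠ 0. -/
theorem stmt_17 {n : ℕ} (q : V4 n) (hq : q ≠ 0) :
    (Baston (fun x => -(1 / (∑ a, x a ^ 2))) q) ^ n = 0 := by
  cases n with
  | zero => exact absurd (funext fun a => absurd a.isLt (by omega)) hq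
  | succ m =>
      have hρ : StAux.ρf q ≠ 0 := by
        intro h
        apply hq
        funext a
        have h2 := (Finset.sum_eq_zero_iff_of_nonneg
          (fun b _ => sq_nonneg (q b))).mp h a (Finset.mem_univ a)
        have h3 := pow_eq_zero_iff (n := 2) (by norm_num) |>.mp h2
        simpa using h3
      have hu : (fun x : V4 (m+1) => -(1 / (∑ a, x a ^ 2))) = StAux.urf := rfl
      rw [hu, StAux.baston_formula q hρ]
      apply StAux.key_pow
      show ((4 * StAux.cr q : ℝ) : ℂ) + ((2 * StAux.sr q : ℝ) : ℂ) *
        (∑ l : Fin (m+1), (StAux.ζv (inl l) q * StAux.wv (inr l) q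
          - StAux.ζv (inr l) q * StAux.wv (inl l) q)) = 0
      rw [StAux.pairing_eq q]
      have hreal : (4 * StAux.cr q + 2 * StAux.sr q * StAux.ρf q : ℝ) = 0 := by
        unfold StAux.cr StAux.sr
        field_simp
        ring
      rw [← Complex.ofReal_mul, ← Complex.ofReal_add, hreal, Complex.ofReal_zero]

end
end

section
/- Let 𝓤 ∈ M_ℍ(n,n) act on ℍⁿ ≅ ℝ^{4n} by the real-linear map q ↦ 𝓤q, let ũ be a real C¹ function on ℝ^{4n}, and set u(q) = ũ(𝓤q). Then for every A = 0,…,2n−1, α ∈ {0',1'}, and q ∈ ℝ^{4n}: (∇_{Aα}u)(q) = Σ_{B=0}^{2n−1} conj(τ(𝓤))_{BA} · (∇_{Bα}ũ)(𝓤q). -/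
open scoped Quaternion
open Matrix Sum

noncomputable section

-- auxiliary development
def e4 : Fin 4 → ℍ[ℝ] := ![1, iH, jH, kH]

lemma X_eq_iff {n : ℕ} {m l : Fin n} {δ γ : Fin 4} : X m δ = X l γ ↔ (m = l ∧ δ = γ) := by
  simp only [X, Fin.ext_iff]
  omega

lemma X_val {n : ℕ} (l : Fin n) (β : Fin 4) : (X l β).val = 4 * l.val + β.val := rfl

lemma quatv_add {n : ℕ} (v w : V4 n) : quatv (v + w) = quatv v + quatv w := by
  funext l; ext <;> simp [quatv] <;> rfl

lemma quatv_smul {n : ℕ} (c : ℝ) (v : V4 n) : quatv (c • v) = c • quatv v := by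
  funext l; ext <;> simp [quatv] <;> rfl

lemma comp4_add (p r : ℍ[ℝ]) (i : Fin 4) : comp4 (p + r) i = comp4 p i + comp4 r i := by
  fin_cases i <;> simp [comp4]

lemma comp4_smul (c : ℝ) (p : ℍ[ℝ]) (i : Fin 4) : comp4 (c • p) i = c * comp4 p i := by
  fin_cases i <;> simp [comp4]

def actL {n : ℕ} (U : Matrix (Fin n) (Fin n) ℍ[ℝ]) : V4 n →ₗ[ℝ] V4 n where
  toFun := act U
  map_add' v w := by
    funext a
    simp [act, quatv_add, Matrix.mulVec_add, comp4_add]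
  map_smul' c v := by
    funext a
    simp [act, quatv_smul, Matrix.mulVec_smul, comp4_smul]
lemma act_apply {n : ℕ} (U : Matrix (Fin n) (Fin n) ℍ[ℝ]) (v : V4 n) (k : Fin n) (β : Fin 4) :
    act U v (X k β) = comp4 ((U *ᵥ quatv v) k) β := by
  have h1 : (⟨(X k β).val / 4, by have := (X k β).isLt; omega⟩ : Fin n) = k := by
    ext; simp [X_val]; omega
  have h2 : (⟨(X k β).val % 4, by omega⟩ : Fin 4) = β := by
    ext; simp [X_val]
  simp only [act, h1, h2]

lemma quatv_single {n : ℕ} (l : Fin n) (γ : Fin 4) :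
    quatv (Pi.single (X l γ) (1:ℝ)) = Pi.single l (e4 γ) := by
  funext m
  by_cases hm : m = l
  · subst hm
    fin_cases γ <;>
      · ext <;>
          simp [quatv, Pi.single_apply, X_eq_iff, e4, iH, jH, kH, Fin.ext_iff, X_val] <;>
          erw [Pi.single_eq_same]
  · have h0 : ∀ δ : Fin 4, (Pi.single (X l γ) (1:ℝ) : V4 n) (X m δ) = 0 := by
      intro δ; rw [Pi.single_apply, if_neg]; simp [X_eq_iff]; intro h; exact absurd h hm
    ext <;> simp [quatv, h0, Pi.single_apply, Ne.symm hm, hm]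

lemma act_single {n : ℕ} (U : Matrix (Fin n) (Fin n) ℍ[ℝ]) (l k : Fin n) (γ β : Fin 4) :
    act U (Pi.single (X l γ) 1) (X k β) = comp4 (U k l * e4 γ) β := by
  rw [act_apply, quatv_single, Matrix.mulVec_single]
  rfl
def idx4 (n : ℕ) : Fin n × Fin 4 ≃ Fin (4 * n) where
  toFun p := X p.1 p.2
  invFun a := (⟨a.val / 4, by have := a.isLt; omega⟩, ⟨a.val % 4, by omega⟩)
  left_inv p := by
    ext <;> simp [X_val] <;> omega
  right_inv a := by
    ext; simp [X_val]; omega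

lemma pd_comp {n : ℕ} (U : Matrix (Fin n) (Fin n) ℍ[ℝ]) (f : V4 n → ℂ)
    (hf : Differentiable ℝ f) (a : Fin (4 * n)) (q : V4 n) :
    pd a (fun y => f (act U y)) q =
      ∑ b : Fin (4 * n), (act U (Pi.single a 1) b : ℂ) * pd b f (act U q) := by
  set L := LinearMap.toContinuousLinearMap (actL U) with hL
  have hact : act U = ⇑L := rfl
  have hcomp : (fun y => f (act U y)) = f ∘ ⇑L := by rw [hact]; rfl
  have hfd : fderiv ℝ (f ∘ ⇑L) q = (fderiv ℝ f (L q)).comp L := by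
    rw [fderiv_comp (x := q) (hf _) L.differentiableAt, L.fderiv]
  have hsingle : L (Pi.single a 1) = ∑ b : Fin (4 * n), (act U (Pi.single a 1) b) • (Pi.single b (1:ℝ) : V4 n) := by
    rw [hact]
    funext c
    rw [Finset.sum_apply]
    simp [Pi.single_apply, Finset.sum_ite_eq']
  calc pd a (fun y => f (act U y)) q = fderiv ℝ (f ∘ ⇑L) q (Pi.single a 1) := by
        rw [pd, hcomp]
    _ = fderiv ℝ f (L q) (L (Pi.single a 1)) := by rw [hfd]; rfl
    _ = ∑ b : Fin (4 * n), (act U (Pi.single a 1) b : ℂ) * pd b f (act U q) := by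
        rw [hsingle, map_sum]
        refine Finset.sum_congr rfl fun b _ => ?_
        rw [_root_.map_smul, Complex.real_smul, pd, hact]
open Complex in
lemma key_l0 (u : ℍ[ℝ]) (d : Fin 4 → ℂ) :
    (∑ β : Fin 4, (comp4 (u * e4 0) β : ℂ) * d β)
      + Complex.I * (∑ β : Fin 4, (comp4 (u * e4 1) β : ℂ) * d β)
    = (starRingEnd ℂ) (qa u) * (d 0 + Complex.I * d 1) + qb u * (d 2 - Complex.I * d 3) := by
  simp only [Fin.sum_univ_four, comp4, e4, qa, qb,
    Quaternion.re_mul, Quaternion.imI_mul, Quaternion.imJ_mul, Quaternion.imK_mul,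
    Matrix.cons_val_zero, Matrix.cons_val_one, Matrix.head_cons, Matrix.cons_val_two,
    Matrix.tail_cons, Matrix.cons_val_three]
  apply Complex.ext <;>
    simp [Complex.add_re, Complex.add_im, Complex.mul_re, Complex.mul_im, Complex.sub_re,
      Complex.sub_im, Complex.I_re, Complex.I_im, Complex.conj_re, Complex.conj_im,
      Complex.ofReal_re, Complex.ofReal_im, iH, jH, kH] <;> ring
lemma key_l1 (u : ℍ[ℝ]) (d : Fin 4 → ℂ) :
    -(∑ β : Fin 4, (comp4 (u * e4 2) β : ℂ) * d β)
      - Complex.I * (∑ β : Fin 4, (comp4 (u * e4 3) β : ℂ) * d β)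
    = (starRingEnd ℂ) (qa u) * (-d 2 - Complex.I * d 3) + qb u * (d 0 - Complex.I * d 1) := by
  simp only [Fin.sum_univ_four, comp4, e4, qa, qb,
    Quaternion.re_mul, Quaternion.imI_mul, Quaternion.imJ_mul, Quaternion.imK_mul,
    Matrix.cons_val_zero, Matrix.cons_val_one, Matrix.head_cons, Matrix.cons_val_two,
    Matrix.tail_cons, Matrix.cons_val_three]
  apply Complex.ext <;>
    simp [Complex.mul_re, Complex.mul_im, Complex.conj_re, Complex.conj_im, iH, jH, kH] <;> ring

lemma key_r0 (u : ℍ[ℝ]) (d : Fin 4 → ℂ) :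
    (∑ β : Fin 4, (comp4 (u * e4 2) β : ℂ) * d β)
      - Complex.I * (∑ β : Fin 4, (comp4 (u * e4 3) β : ℂ) * d β)
    = -(starRingEnd ℂ) (qb u) * (d 0 + Complex.I * d 1) + qa u * (d 2 - Complex.I * d 3) := by
  simp only [Fin.sum_univ_four, comp4, e4, qa, qb,
    Quaternion.re_mul, Quaternion.imI_mul, Quaternion.imJ_mul, Quaternion.imK_mul,
    Matrix.cons_val_zero, Matrix.cons_val_one, Matrix.head_cons, Matrix.cons_val_two,
    Matrix.tail_cons, Matrix.cons_val_three]
  apply Complex.ext <;>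
    simp [Complex.mul_re, Complex.mul_im, Complex.conj_re, Complex.conj_im, iH, jH, kH] <;> ring

lemma key_r1 (u : ℍ[ℝ]) (d : Fin 4 → ℂ) :
    (∑ β : Fin 4, (comp4 (u * e4 0) β : ℂ) * d β)
      - Complex.I * (∑ β : Fin 4, (comp4 (u * e4 1) β : ℂ) * d β)
    = -(starRingEnd ℂ) (qb u) * (-d 2 - Complex.I * d 3) + qa u * (d 0 - Complex.I * d 1) := by
  simp only [Fin.sum_univ_four, comp4, e4, qa, qb,
    Quaternion.re_mul, Quaternion.imI_mul, Quaternion.imJ_mul, Quaternion.imK_mul,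
    Matrix.cons_val_zero, Matrix.cons_val_one, Matrix.head_cons, Matrix.cons_val_two,
    Matrix.tail_cons, Matrix.cons_val_three]
  apply Complex.ext <;>
    simp [Complex.mul_re, Complex.mul_im, Complex.conj_re, Complex.conj_im, iH, jH, kH] <;> ring
/-- transformation rule for ∇_{Aα} under a quaternionic linear map:
(∇_{Aα}u)(q) = Σ_B conj(τ(𝓤))_{BA}(∇_{Bα}ũ)(𝓤q), where u = ũ∘𝓤. -/
theorem stmt_18 {n : ℕ} (U : Matrix (Fin n) (Fin n) ℍ[ℝ]) (ut : V4 n → ℝ)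
    (hut : ContDiff ℝ 1 ut) (A : Idx n) (α : Fin 2) (q : V4 n) :
    nablaR A α (fun y => ut (act U y)) q =
      ∑ B : Idx n, conjM (tau U) B A * nablaR B α ut (act U q) := by
  have hf : Differentiable ℝ (fun x : V4 n => ((ut x : ℝ) : ℂ)) :=
    Complex.ofRealCLM.differentiable.comp (hut.differentiable one_ne_zero)
  have hpd : ∀ (γ : Fin 4) (l : Fin n),
      pd (X l γ) (fun y => ((ut (act U y) : ℝ) : ℂ)) q
        = ∑ k : Fin n, ∑ β : Fin 4,
            (comp4 (U k l * e4 γ) β : ℂ) * pd (X k β) (fun x => ((ut x : ℝ) : ℂ)) (act U q) := by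
    intro γ l
    rw [pd_comp U _ hf, ← Equiv.sum_comp (idx4 n), Fintype.sum_prod_type]
    exact Finset.sum_congr rfl fun k _ => Finset.sum_congr rfl fun β _ => by
      rw [show (idx4 n) (k, β) = X k β from rfl, act_single]
  rcases A with l | l <;> fin_cases α <;>
    simp only [nablaR, nabla, Fin.mk_zero, Fin.mk_one, one_ne_zero, if_true, if_false,
      ite_true, ite_false, reduceIte, Fin.isValue, Fintype.sum_sum_type,
      conjM, tau, Matrix.map_apply, Matrix.fromBlocks_apply₁₁, Matrix.fromBlocks_apply₁₂,
      Matrix.fromBlocks_apply₂₁, Matrix.fromBlocks_apply₂₂, Matrix.neg_apply, map_neg,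
      RingHom.coe_coe, starRingEnd_self_apply]
  · -- A = inl l, α = 0
    rw [hpd 0 l, hpd 1 l, Finset.mul_sum, ← Finset.sum_add_distrib, ← Finset.sum_add_distrib]
    exact Finset.sum_congr rfl fun k _ =>
      key_l0 (U k l) (fun β => pd (X k β) (fun x => ((ut x : ℝ) : ℂ)) (act U q))
  · -- A = inl l, α = 1
    rw [hpd 2 l, hpd 3 l, Finset.mul_sum, ← Finset.sum_neg_distrib,
      ← Finset.sum_sub_distrib, ← Finset.sum_add_distrib]
    exact Finset.sum_congr rfl fun k _ =>
      key_l1 (U k l) (fun β => pd (X k β) (fun x => ((ut x : ℝ) : ℂ)) (act U q))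
  · -- A = inr l, α = 0
    rw [hpd 2 l, hpd 3 l, Finset.mul_sum, ← Finset.sum_sub_distrib, ← Finset.sum_add_distrib]
    exact Finset.sum_congr rfl fun k _ =>
      key_r0 (U k l) (fun β => pd (X k β) (fun x => ((ut x : ℝ) : ℂ)) (act U q))
  · -- A = inr l, α = 1
    rw [hpd 0 l, hpd 1 l, Finset.mul_sum, ← Finset.sum_sub_distrib, ← Finset.sum_add_distrib]
    exact Finset.sum_congr rfl fun k _ =>
      key_r1 (U k l) (fun β => pd (X k β) (fun x => ((ut x : ℝ) : ℂ)) (act U q))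

end
end

section
/- Let 𝓤 ∈ M_ℍ(n,n) act on ℍⁿ ≅ ℝ^{4n} by q ↦ 𝓤q, let ũ be a real C² function on ℝ^{4n}, and set u(q) = ũ(𝓤q). Then the Baston operator transforms covariantly: for every q ∈ ℝ^{4n}, the matrix identity (Δ_{AB}u(q))_{A,B} = conj(τ(𝓤))ᵗ · (Δ_{CD}ũ(𝓤q))_{C,D} · conj(τ(𝓤)) holds; equivalently, Δu(q) = Σ_{C,D} (Δ_{CD}ũ)(𝓤q) · (conj(τ(𝓤)).ω^C)∧(conj(τ(𝓤)).ω^D), so Δ is invariant under quaternionic linear transformations (with the transformed basis ω̃^C = conj(τ(𝓤)).ω^C). -/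
open scoped Quaternion
open Matrix Sum

noncomputable section

namespace BAux
variable {n : ℕ}

def uQ : Fin 4 → ℍ[ℝ] := ![1, iH, jH, kH]

lemma X_eq_iff {l m : Fin n} {β γ : Fin 4} : X m γ = X l β ↔ m = l ∧ γ = β := by
  constructor
  · intro h
    have h' : 4 * m.val + γ.val = 4 * l.val + β.val := congrArg Fin.val h
    have hb := β.isLt; have hg := γ.isLt
    exact ⟨Fin.ext (by omega), Fin.ext (by omega)⟩
  · rintro ⟨rfl, rfl⟩; rfl

lemma single_X (l m : Fin n) (β γ : Fin 4) :
    (Pi.single (X l β) (1:ℝ) : V4 n) (X m γ) = if m = l ∧ γ = β then 1 else 0 := by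
  by_cases h : m = l ∧ γ = β
  · obtain ⟨rfl, rfl⟩ := h; simp
  · rw [if_neg h, Pi.single_eq_of_ne (fun he => h (X_eq_iff.mp he))]

lemma quatv_single (l : Fin n) (β : Fin 4) :
    quatv (Pi.single (X l β) (1:ℝ)) = Pi.single l (uQ β) := by
  funext m
  rcases eq_or_ne m l with rfl | hm
  · rw [Pi.single_eq_same]
    fin_cases β <;>
      simp [quatv, single_X, uQ, iH, jH, kH, QuaternionAlgebra.ext_iff] <;> rfl
  · rw [Pi.single_eq_of_ne hm]
    simp [quatv, single_X, hm, QuaternionAlgebra.ext_iff]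
    rfl

def eq4 (n : ℕ) : Fin n × Fin 4 ≃ Fin (4 * n) where
  toFun p := X p.1 p.2
  invFun a := (⟨a.val / 4, by have := a.isLt; omega⟩, ⟨a.val % 4, by omega⟩)
  left_inv p := by
    rcases p with ⟨l, β⟩
    have hb := β.isLt
    refine Prod.ext (Fin.ext ?_) (Fin.ext ?_) <;> simp [X] <;> omega
  right_inv a := by
    apply Fin.ext
    simp [X]
    omega


lemma comp4_add (p q : ℍ[ℝ]) (γ : Fin 4) : comp4 (p + q) γ = comp4 p γ + comp4 q γ := by
  fin_cases γ <;> simp [comp4]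

lemma comp4_smul (c : ℝ) (p : ℍ[ℝ]) (γ : Fin 4) : comp4 (c • p) γ = c * comp4 p γ := by
  fin_cases γ <;> simp [comp4]

lemma quatv_add (v w : V4 n) : quatv (v + w) = quatv v + quatv w := by
  funext m
  ext <;> simp [quatv] <;> rfl

lemma quatv_smul (c : ℝ) (v : V4 n) : quatv (c • v) = c • quatv v := by
  funext m
  ext <;> simp [quatv] <;> rfl

def actL (U : Matrix (Fin n) (Fin n) ℍ[ℝ]) : V4 n →L[ℝ] V4 n :=
  LinearMap.toContinuousLinearMap
    { toFun := act U
      map_add' := fun v w => by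
        funext a
        simp only [act, quatv_add, Matrix.mulVec_add, Pi.add_apply, comp4_add]
      map_smul' := fun c v => by
        funext a
        simp only [act, quatv_smul, Matrix.mulVec_smul, Pi.smul_apply, comp4_smul,
          RingHom.id_apply, smul_eq_mul] }

lemma actL_apply (U : Matrix (Fin n) (Fin n) ℍ[ℝ]) (v : V4 n) : actL U v = act U v := rfl

lemma act_apply_X (U : Matrix (Fin n) (Fin n) ℍ[ℝ]) (v : V4 n) (m : Fin n) (γ : Fin 4) :
    act U v (X m γ) = comp4 ((U *ᵥ quatv v) m) γ := by
  have hg := γ.isLt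
  have h1 : (⟨(X m γ).val / 4, by have := (X m γ).isLt; omega⟩ : Fin n) = m :=
    Fin.ext (by simp only [X]; omega)
  have h2 : (⟨(X m γ).val % 4, by omega⟩ : Fin 4) = γ :=
    Fin.ext (by simp only [X]; omega)
  show comp4 ((U *ᵥ quatv v) _) _ = _
  rw [h1, h2]

lemma fderiv_act_comp (U : Matrix (Fin n) (Fin n) ℍ[ℝ]) (f : V4 n → ℂ) {q : V4 n}
    (hf : DifferentiableAt ℝ f (act U q)) :
    fderiv ℝ (fun x => f (act U x)) q = (fderiv ℝ f (act U q)).comp (actL U : V4 n →L[ℝ] V4 n) := by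
  have h1 : (fun x => f (act U x)) = f ∘ (actL U) := rfl
  rw [h1, fderiv_comp q (show DifferentiableAt ℝ f ((actL U) q) from hf) ((actL U).differentiableAt), (actL U).fderiv]
  rfl

lemma fderiv_expand (f : V4 n → ℂ) {y : V4 n} (hf : DifferentiableAt ℝ f y) (v : V4 n) :
    fderiv ℝ f y v = ∑ m : Fin n, ∑ γ : Fin 4, v (X m γ) • pd (X m γ) f y := by
  have h1 : v = ∑ a : Fin (4 * n), v a • (Pi.single a (1:ℝ) : V4 n) := by
    conv_lhs => rw [← Finset.univ_sum_single v]
    refine Finset.sum_congr rfl fun a _ => ?_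
    rw [← Pi.single_smul, smul_eq_mul, mul_one]
  conv_lhs => rw [h1]
  rw [map_sum]
  simp only [_root_.map_smul]
  rw [← Equiv.sum_comp (eq4 n) (fun a => v a • fderiv ℝ f y (Pi.single a (1:ℝ)))]
  rw [Fintype.sum_prod_type]
  rfl

lemma pd_comp (U : Matrix (Fin n) (Fin n) ℍ[ℝ]) (f : V4 n → ℂ) {q : V4 n}
    (hf : DifferentiableAt ℝ f (act U q)) (l : Fin n) (β : Fin 4) :
    pd (X l β) (fun x => f (act U x)) q
      = ∑ m : Fin n, ∑ γ : Fin 4, comp4 (U m l * uQ β) γ • pd (X m γ) f (act U q) := by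
  have h0 : pd (X l β) (fun x => f (act U x)) q
      = fderiv ℝ f (act U q) (act U (Pi.single (X l β) 1)) := by
    show fderiv ℝ (fun x => f (act U x)) q (Pi.single (X l β) 1) = _
    rw [fderiv_act_comp U f hf]
    rfl
  rw [h0, fderiv_expand f hf]
  refine Finset.sum_congr rfl fun m _ => Finset.sum_congr rfl fun γ _ => ?_
  rw [act_apply_X, quatv_single, Matrix.mulVec_single]
  rfl


variable {U : Matrix (Fin n) (Fin n) ℍ[ℝ]}

lemma conjtau_ll (m l : Fin n) : conjM (tau U) (inl m) (inl l) = (starRingEnd ℂ) (qa (U m l)) := by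
  simp [conjM, tau, Matrix.map_apply]

lemma conjtau_rl (m l : Fin n) : conjM (tau U) (inr m) (inl l) = qb (U m l) := by
  simp [conjM, tau, Matrix.map_apply]

lemma conjtau_lr (m l : Fin n) : conjM (tau U) (inl m) (inr l) = -(starRingEnd ℂ) (qb (U m l)) := by
  simp [conjM, tau, Matrix.map_apply]

lemma conjtau_rr (m l : Fin n) : conjM (tau U) (inr m) (inr l) = qa (U m l) := by
  simp [conjM, tau, Matrix.map_apply]

lemma nabla_comp (f : V4 n → ℂ) {q : V4 n} (hf : DifferentiableAt ℝ f (act U q))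
    (A : Idx n) (α : Fin 2) :
    nabla A α (fun x => f (act U x)) q
      = ∑ C : Idx n, conjM (tau U) C A * nabla C α f (act U q) := by
  rw [Fintype.sum_sum_type, ← Finset.sum_add_distrib]
  rcases A with l | l <;> fin_cases α
  · show pd (X l 0) (fun x => f (act U x)) q + Complex.I * pd (X l 1) (fun x => f (act U x)) q = _
    rw [pd_comp U f hf, pd_comp U f hf, Finset.mul_sum, ← Finset.sum_add_distrib]
    refine Finset.sum_congr rfl fun m _ => ?_
    rw [Finset.mul_sum, ← Finset.sum_add_distrib, conjtau_ll, conjtau_rl]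
    show _ = _ * (pd (X m 0) f (act U q) + Complex.I * pd (X m 1) f (act U q))
        + _ * (pd (X m 2) f (act U q) - Complex.I * pd (X m 3) f (act U q))
    rw [Fin.sum_univ_four]
    set p := U m l
    set D0 := pd (X m 0) f (act U q)
    set D1 := pd (X m 1) f (act U q)
    set D2 := pd (X m 2) f (act U q)
    set D3 := pd (X m 3) f (act U q)
    simp [BAux.uQ, comp4, Quaternion.re_mul, Quaternion.imI_mul, Quaternion.imJ_mul, Quaternion.imK_mul]
    simp [BAux.uQ, comp4, iH, jH, kH, Complex.real_smul, qa, qb, Complex.ext_iff]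
    constructor <;> ring
  · show -pd (X l 2) (fun x => f (act U x)) q - Complex.I * pd (X l 3) (fun x => f (act U x)) q = _
    rw [pd_comp U f hf, pd_comp U f hf, Finset.mul_sum, ← Finset.sum_neg_distrib,
      ← Finset.sum_sub_distrib]
    refine Finset.sum_congr rfl fun m _ => ?_
    rw [Finset.mul_sum, ← Finset.sum_neg_distrib, ← Finset.sum_sub_distrib, conjtau_ll, conjtau_rl]
    show _ = _ * (-pd (X m 2) f (act U q) - Complex.I * pd (X m 3) f (act U q))
        + _ * (pd (X m 0) f (act U q) - Complex.I * pd (X m 1) f (act U q))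
    rw [Fin.sum_univ_four]
    simp [BAux.uQ, comp4, Quaternion.re_mul, Quaternion.imI_mul, Quaternion.imJ_mul, Quaternion.imK_mul]
    simp [BAux.uQ, comp4, iH, jH, kH, Complex.real_smul, qa, qb, Complex.ext_iff]
    constructor <;> ring
  · show pd (X l 2) (fun x => f (act U x)) q - Complex.I * pd (X l 3) (fun x => f (act U x)) q = _
    rw [pd_comp U f hf, pd_comp U f hf, Finset.mul_sum, ← Finset.sum_sub_distrib]
    refine Finset.sum_congr rfl fun m _ => ?_
    rw [Finset.mul_sum, ← Finset.sum_sub_distrib, conjtau_lr, conjtau_rr]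
    show _ = _ * (pd (X m 0) f (act U q) + Complex.I * pd (X m 1) f (act U q))
        + _ * (pd (X m 2) f (act U q) - Complex.I * pd (X m 3) f (act U q))
    rw [Fin.sum_univ_four]
    simp [BAux.uQ, comp4, Quaternion.re_mul, Quaternion.imI_mul, Quaternion.imJ_mul, Quaternion.imK_mul]
    simp [BAux.uQ, comp4, iH, jH, kH, Complex.real_smul, qa, qb, Complex.ext_iff]
    constructor <;> ring
  · show pd (X l 0) (fun x => f (act U x)) q - Complex.I * pd (X l 1) (fun x => f (act U x)) q = _
    rw [pd_comp U f hf, pd_comp U f hf, Finset.mul_sum, ← Finset.sum_sub_distrib]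
    refine Finset.sum_congr rfl fun m _ => ?_
    rw [Finset.mul_sum, ← Finset.sum_sub_distrib, conjtau_lr, conjtau_rr]
    show _ = _ * (-pd (X m 2) f (act U q) - Complex.I * pd (X m 3) f (act U q))
        + _ * (pd (X m 0) f (act U q) - Complex.I * pd (X m 1) f (act U q))
    rw [Fin.sum_univ_four]
    simp [BAux.uQ, comp4, Quaternion.re_mul, Quaternion.imI_mul, Quaternion.imJ_mul, Quaternion.imK_mul]
    simp [BAux.uQ, comp4, iH, jH, kH, Complex.real_smul, qa, qb, Complex.ext_iff]
    constructor <;> ring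


lemma contDiff_pd {f : V4 n → ℂ} (hf : ContDiff ℝ 2 f) (a : Fin (4 * n)) :
    ContDiff ℝ 1 (pd a f) := by
  have h1 : ContDiff ℝ 1 (fderiv ℝ f) := hf.fderiv_right (by norm_num)
  exact h1.clm_apply contDiff_const

lemma contDiff_nabla {f : V4 n → ℂ} (hf : ContDiff ℝ 2 f) (A : Idx n) (α : Fin 2) :
    ContDiff ℝ 1 (nabla A α f) := by
  rcases A with l | l <;> fin_cases α
  · exact (contDiff_pd hf _).add (contDiff_const.mul (contDiff_pd hf _))
  · exact ((contDiff_pd hf _).neg).sub (contDiff_const.mul (contDiff_pd hf _))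
  · exact (contDiff_pd hf _).sub (contDiff_const.mul (contDiff_pd hf _))
  · exact (contDiff_pd hf _).sub (contDiff_const.mul (contDiff_pd hf _))

lemma pd_sum (a : Fin (4 * n)) (c : Idx n → ℂ) (g : Idx n → V4 n → ℂ) {q : V4 n}
    (hg : ∀ D, DifferentiableAt ℝ (g D) q) :
    pd a (fun x => ∑ D : Idx n, c D * g D x) q = ∑ D : Idx n, c D * pd a (g D) q := by
  show fderiv ℝ (fun x => ∑ D : Idx n, c D * g D x) q (Pi.single a 1) = _
  have h1 : fderiv ℝ (fun x => ∑ D : Idx n, c D * g D x) q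
      = ∑ D : Idx n, c D • fderiv ℝ (g D) q := by
    rw [fderiv_fun_sum (fun D _ => (hg D).const_mul (c D))]
    exact Finset.sum_congr rfl fun D _ => fderiv_const_mul (hg D) (c D)
  rw [h1]
  simp [ContinuousLinearMap.sum_apply, pd]

lemma nabla_sum (A : Idx n) (α : Fin 2) (c : Idx n → ℂ) (g : Idx n → V4 n → ℂ) {q : V4 n}
    (hg : ∀ D, DifferentiableAt ℝ (g D) q) :
    nabla A α (fun x => ∑ D : Idx n, c D * g D x) q = ∑ D : Idx n, c D * nabla A α (g D) q := by
  rcases A with l | l <;> fin_cases α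
  · show pd (X l 0) _ q + Complex.I * pd (X l 1) _ q = _
    rw [pd_sum _ c g hg, pd_sum _ c g hg, Finset.mul_sum, ← Finset.sum_add_distrib]
    refine Finset.sum_congr rfl fun D _ => ?_
    show _ = c D * (pd (X l 0) (g D) q + Complex.I * pd (X l 1) (g D) q)
    ring
  · show -pd (X l 2) _ q - Complex.I * pd (X l 3) _ q = _
    rw [pd_sum _ c g hg, pd_sum _ c g hg, Finset.mul_sum, ← Finset.sum_neg_distrib,
      ← Finset.sum_sub_distrib]
    refine Finset.sum_congr rfl fun D _ => ?_
    show _ = c D * (-pd (X l 2) (g D) q - Complex.I * pd (X l 3) (g D) q)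
    ring
  · show pd (X l 2) _ q - Complex.I * pd (X l 3) _ q = _
    rw [pd_sum _ c g hg, pd_sum _ c g hg, Finset.mul_sum, ← Finset.sum_sub_distrib]
    refine Finset.sum_congr rfl fun D _ => ?_
    show _ = c D * (pd (X l 2) (g D) q - Complex.I * pd (X l 3) (g D) q)
    ring
  · show pd (X l 0) _ q - Complex.I * pd (X l 1) _ q = _
    rw [pd_sum _ c g hg, pd_sum _ c g hg, Finset.mul_sum, ← Finset.sum_sub_distrib]
    refine Finset.sum_congr rfl fun D _ => ?_
    show _ = c D * (pd (X l 0) (g D) q - Complex.I * pd (X l 1) (g D) q)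
    ring


lemma delta_comp (ut : V4 n → ℝ) (hut : ContDiff ℝ 2 ut) (q : V4 n) (A B : Idx n) :
    Delta A B (fun y => ut (act U y)) q
      = ∑ C : Idx n, ∑ D : Idx n,
          conjM (tau U) C A * Delta C D ut (act U q) * conjM (tau U) D B := by
  have hc2 : ContDiff ℝ 2 (fun x : V4 n => ((ut x : ℝ) : ℂ)) :=
    Complex.ofRealCLM.contDiff.comp hut
  set uc : V4 n → ℂ := fun x => ((ut x : ℝ) : ℂ) with huc
  have hdiff : ∀ x, DifferentiableAt ℝ uc x :=
    fun x => (hc2.differentiable (by norm_num)).differentiableAt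
  have hnd : ∀ (D : Idx n) (β : Fin 2) (x : V4 n), DifferentiableAt ℝ (nabla D β uc) x :=
    fun D β x => ((contDiff_nabla hc2 D β).differentiable one_ne_zero).differentiableAt
  set M := conjM (tau U) with hM
  have key : ∀ E : Idx n, nabla E 1 (fun x => uc (act U x))
      = fun x => ∑ D : Idx n, M D E * nabla D 1 uc (act U x) :=
    fun E => funext fun x => nabla_comp uc (hdiff _) E 1
  have hcomp : ∀ (D : Idx n) (x : V4 n),
      DifferentiableAt ℝ (fun z => nabla D 1 uc (act U z)) x :=
    fun D x => (hnd D 1 (act U x)).comp x (actL U).differentiableAt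
  have outer : ∀ A' B' : Idx n,
      nabla A' 0 (nabla B' 1 (fun x => uc (act U x))) q
        = ∑ D : Idx n, M D B' *
            ∑ C : Idx n, M C A' * nabla C 0 (nabla D 1 uc) (act U q) := by
    intro A' B'
    rw [key B']
    rw [nabla_sum A' 0 (fun D => M D B') (fun D x => nabla D 1 uc (act U x))
      (fun D => hcomp D q)]
    refine Finset.sum_congr rfl fun D _ => ?_
    rw [nabla_comp (nabla D 1 uc) (hnd D 1 _) A' 0]
  have hDel : ∀ C D : Idx n, Delta C D ut (act U q)
      = (1/2 : ℂ) * (nabla C 0 (nabla D 1 uc) (act U q)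
          - nabla D 0 (nabla C 1 uc) (act U q)) := fun C D => rfl
  have e1 : (∑ D : Idx n, M D B * ∑ C : Idx n, M C A * nabla C 0 (nabla D 1 uc) (act U q))
      = ∑ C : Idx n, ∑ D : Idx n,
          M C A * nabla C 0 (nabla D 1 uc) (act U q) * M D B := by
    simp only [Finset.mul_sum]
    rw [Finset.sum_comm]
    exact Finset.sum_congr rfl fun C _ => Finset.sum_congr rfl fun D _ => by ring
  have e2 : (∑ D : Idx n, M D A * ∑ C : Idx n, M C B * nabla C 0 (nabla D 1 uc) (act U q))
      = ∑ C : Idx n, ∑ D : Idx n,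
          M C A * nabla D 0 (nabla C 1 uc) (act U q) * M D B := by
    simp only [Finset.mul_sum]
    exact Finset.sum_congr rfl fun x _ => Finset.sum_congr rfl fun y _ => by ring
  show (1/2 : ℂ) * (nabla A 0 (nabla B 1 (fun x => uc (act U x))) q
      - nabla B 0 (nabla A 1 (fun x => uc (act U x))) q) = _
  rw [outer A B, outer B A, e1, e2, ← Finset.sum_sub_distrib, Finset.mul_sum]
  refine Finset.sum_congr rfl fun C _ => ?_
  rw [← Finset.sum_sub_distrib, Finset.mul_sum]
  refine Finset.sum_congr rfl fun D _ => ?_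
  rw [hDel C D]
  ring


lemma actE_ω (N : Matrix (Idx n) (Idx n) ℂ) (C : Idx n) :
    actE N (ω C) = ∑ A : Idx n, N C A • ω A := by
  unfold actE ω
  rw [ExteriorAlgebra.map_apply_ι]
  have h1 : (Matrix.mulVecLin Nᵀ) (Pi.single C 1) = fun A => N C A := by
    rw [Matrix.mulVecLin_apply, Matrix.mulVec_single]
    funext A
    simp [Matrix.transpose_apply]
  rw [h1]
  have h2 : (fun A => N C A) = ∑ A : Idx n, N C A • (Pi.single A (1:ℂ) : Vc n) := by
    conv_lhs => rw [← Finset.univ_sum_single (fun A => N C A)]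
    refine Finset.sum_congr rfl fun A _ => ?_
    rw [← Pi.single_smul, smul_eq_mul, mul_one]
  rw [h2, map_sum]
  simp only [_root_.map_smul]

lemma sum_comm4 {G : Type*} [AddCommMonoid G] {ι : Type*} [Fintype ι]
    (f : ι → ι → ι → ι → G) :
    ∑ a : ι, ∑ b : ι, ∑ c : ι, ∑ d : ι, f a b c d
      = ∑ c : ι, ∑ d : ι, ∑ a : ι, ∑ b : ι, f a b c d :=
  calc ∑ a : ι, ∑ b : ι, ∑ c : ι, ∑ d : ι, f a b c d
      = ∑ a : ι, ∑ c : ι, ∑ b : ι, ∑ d : ι, f a b c d :=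
        Finset.sum_congr rfl fun a _ => Finset.sum_comm
    _ = ∑ c : ι, ∑ a : ι, ∑ b : ι, ∑ d : ι, f a b c d := Finset.sum_comm
    _ = ∑ c : ι, ∑ a : ι, ∑ d : ι, ∑ b : ι, f a b c d :=
        Finset.sum_congr rfl fun c _ => Finset.sum_congr rfl fun a _ => Finset.sum_comm
    _ = ∑ c : ι, ∑ d : ι, ∑ a : ι, ∑ b : ι, f a b c d :=
        Finset.sum_congr rfl fun c _ => Finset.sum_comm

end BAux

/-- the Baston operator transforms covariantly under quaternionic
linear transformations: (Δ_{AB}u) = conj(τ(𝓤))ᵗ·(Δ_{CD}ũ∘𝓤)·conj(τ(𝓤));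
equivalently Δu = Σ (Δ_{CD}ũ)(𝓤q)·ω̃^C∧ω̃^D with ω̃^C = conj(τ(𝓤)).ω^C. -/
theorem stmt_19 {n : ℕ} (U : Matrix (Fin n) (Fin n) ℍ[ℝ]) (ut : V4 n → ℝ)
    (hut : ContDiff ℝ 2 ut) (q : V4 n) :
    Matrix.of (fun A B : Idx n => Delta A B (fun y => ut (act U y)) q) =
        (conjM (tau U))ᵀ * Matrix.of (fun C D : Idx n => Delta C D ut (act U q)) *
          conjM (tau U) ∧
      Baston (fun y => ut (act U y)) q =
        ∑ C : Idx n, ∑ D : Idx n, Delta C D ut (act U q) •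
          (actE (conjM (tau U)) (ω C) * actE (conjM (tau U)) (ω D)) := by
  constructor
  · ext A B
    show Delta A B (fun y => ut (act U y)) q = _
    rw [BAux.delta_comp ut hut q A B]
    simp only [Matrix.mul_apply, Matrix.transpose_apply, Matrix.of_apply, Finset.sum_mul]
    rw [Finset.sum_comm]
  · have h1 : ∀ A B : Idx n, Delta A B (fun y => ut (act U y)) q • (ω A * ω B)
        = ∑ C : Idx n, ∑ D : Idx n,
            (conjM (tau U) C A * Delta C D ut (act U q) * conjM (tau U) D B) • (ω A * ω B) := by
      intro A B
      rw [BAux.delta_comp ut hut q A B, Finset.sum_smul]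
      exact Finset.sum_congr rfl fun C _ => by rw [Finset.sum_smul]
    have h2 : ∀ C D : Idx n,
        Delta C D ut (act U q) • (actE (conjM (tau U)) (ω C) * actE (conjM (tau U)) (ω D))
        = ∑ A : Idx n, ∑ B : Idx n,
            (conjM (tau U) C A * Delta C D ut (act U q) * conjM (tau U) D B) • (ω A * ω B) := by
      intro C D
      rw [BAux.actE_ω, BAux.actE_ω, Finset.sum_mul_sum, Finset.smul_sum]
      refine Finset.sum_congr rfl fun A _ => ?_
      rw [Finset.smul_sum]
      refine Finset.sum_congr rfl fun B _ => ?_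
      rw [smul_mul_smul_comm, smul_smul]
      congr 1
      ring
    simp only [Baston, h1, h2]
    exact BAux.sum_comm4 _

end
end
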